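/- For all s, t > 0 and all u, v ≥ 0, the logarithmic mean satisfies the supergradient inequality ∂₁θ(s,t)·u + ∂₂θ(s,t)·v ≥ θ(u,v), with equality when (u,v) = (s,t). (Here θ is extended by θ(u,v) = 0 if u = 0 or v = 0.) -/

import Mathlib

/-- The logarithmic mean, extended by 0 on the boundary of [0,∞)². -/
noncomputable def logMean0 (u v : ℝ) : ℝ :=
  if u ≤ 0 ∨ v ≤ 0 then 0
  else if u = v then v else (u - v) / (Real.log u - Real.log v)

open Real MeasureTheory intervalIntegral Set

private lemma continuous_rpow_comp {c : ℝ} (hc : 0 < c) {f : ℝ → ℝ} (hf : Continuous f) :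
    Continuous fun r => c ^ (f r) := by
  have h : (fun r => c ^ (f r)) = fun r => Real.exp (Real.log c * f r) := by
    funext r; rw [Real.rpow_def_of_pos hc]
  rw [h]
  exact Real.continuous_exp.comp (continuous_const.mul hf)

private lemma logMean0_eq_integral {u v : ℝ} (hu : 0 < u) (hv : 0 < v) :
    logMean0 u v = ∫ r in (0:ℝ)..1, u ^ r * v ^ (1 - r) := by
  have hnot : ¬ (u ≤ 0 ∨ v ≤ 0) := by push_neg; exact ⟨hu, hv⟩
  have hL : ∀ r : ℝ, u ^ r * v ^ (1 - r)
      = v * Real.exp ((Real.log u - Real.log v) * r) := by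
    intro r
    have h1 : v * Real.exp ((Real.log u - Real.log v) * r)
        = Real.exp (Real.log v + (Real.log u - Real.log v) * r) := by
      rw [Real.exp_add, Real.exp_log hv]
    rw [h1, Real.rpow_def_of_pos hu, Real.rpow_def_of_pos hv, ← Real.exp_add]
    congr 1; ring
  simp_rw [hL]
  rcases eq_or_ne u v with rfl | huv
  · simp only [sub_self, zero_mul, Real.exp_zero, mul_one]
    rw [intervalIntegral.integral_const]
    rw [logMean0, if_neg hnot, if_pos rfl]
    simp
  · set L := Real.log u - Real.log v with hLdef
    have hLne : L ≠ 0 := by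
      rw [hLdef, sub_ne_zero]
      intro h
      exact huv (by rw [← Real.exp_log hu, ← Real.exp_log hv, h])
    have hI : (∫ r in (0:ℝ)..1, Real.exp (L * r)) = (Real.exp L - 1) / L := by
      have hd : ∀ r ∈ uIcc (0:ℝ) 1,
          HasDerivAt (fun r => Real.exp (L * r) / L) (Real.exp (L * r)) r := by
        intro r _
        have h1 : HasDerivAt (fun r : ℝ => L * r) L r := by
          simpa using (hasDerivAt_id r).const_mul L
        have h2 := (h1.exp).div_const L
        simpa [mul_div_assoc, mul_div_cancel_right₀ _ hLne] using h2
      have hint : IntervalIntegrable (fun r => Real.exp (L * r)) volume 0 1 :=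
        (Real.continuous_exp.comp (continuous_const.mul continuous_id)).intervalIntegrable _ _
      rw [intervalIntegral.integral_eq_sub_of_hasDerivAt hd hint]
      simp [Real.exp_zero]
      ring
    rw [intervalIntegral.integral_const_mul, hI]
    rw [logMean0, if_neg hnot, if_neg huv]
    have hexp : Real.exp L = u / v := by
      rw [hLdef, Real.exp_sub, Real.exp_log hu, Real.exp_log hv]
    rw [hexp, ← hLdef]
    field_simp

private lemma hasDerivAt_logMean_left {s t : ℝ} (hs : 0 < s) (ht : 0 < t) :
    HasDerivAt (fun x => logMean0 x t)
      (∫ r in (0:ℝ)..1, r * s ^ (r - 1) * t ^ (1 - r)) s := by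
  have hcont_t : Continuous fun r : ℝ => t ^ (1 - r) :=
    continuous_rpow_comp ht (continuous_const.sub continuous_id)
  have key := intervalIntegral.hasDerivAt_integral_of_dominated_loc_of_deriv_le
      (F := fun x r => x ^ r * t ^ (1 - r))
      (F' := fun x r => r * x ^ (r - 1) * t ^ (1 - r))
      (x₀ := s) (a := (0:ℝ)) (b := (1:ℝ)) (μ := volume)
      (bound := fun r => (s / 2) ^ (r - 1) * max t 1)
      (Metric.ball_mem_nhds s (half_pos hs))
      ?_ ?_ ?_ ?_ ?_ ?_
  · have heq : (fun x => logMean0 x t) =ᶠ[nhds s]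
        fun x => ∫ r in (0:ℝ)..1, x ^ r * t ^ (1 - r) := by
      filter_upwards [eventually_gt_nhds hs] with x hx
      exact logMean0_eq_integral hx ht
    exact key.2.congr_of_eventuallyEq heq
  · filter_upwards [eventually_gt_nhds hs] with x hx
    exact ((continuous_rpow_comp hx continuous_id).mul hcont_t).aestronglyMeasurable
  · exact ((continuous_rpow_comp hs continuous_id).mul hcont_t).intervalIntegrable _ _
  · exact (((continuous_id.mul
      (continuous_rpow_comp hs (continuous_id.sub continuous_const))).mul
      hcont_t)).aestronglyMeasurable
  · apply Filter.Eventually.of_forall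
    intro r hr x hx
    have hr' : r ∈ Set.Ioc (0:ℝ) 1 := by
      simpa [Set.uIoc_of_le (zero_le_one (α := ℝ))] using hr
    have hxlb : s / 2 < x := by
      have := abs_sub_lt_iff.mp (Metric.mem_ball.mp hx)
      linarith [this.2]
    have hx0 : 0 < x := lt_trans (half_pos hs) hxlb
    have h1 : x ^ (r - 1) ≤ (s / 2) ^ (r - 1) :=
      Real.rpow_le_rpow_of_nonpos (half_pos hs) hxlb.le (by linarith [hr'.2])
    have h2 : t ^ (1 - r) ≤ max t 1 := by
      rcases le_total 1 t with h | h
      · calc t ^ (1 - r) ≤ t ^ (1:ℝ) :=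
              Real.rpow_le_rpow_of_exponent_le h (by linarith [hr'.1])
          _ = t := Real.rpow_one t
          _ ≤ max t 1 := le_max_left t 1
      · calc t ^ (1 - r) ≤ t ^ (0:ℝ) :=
              Real.rpow_le_rpow_of_exponent_ge ht h (by linarith [hr'.2])
          _ = 1 := Real.rpow_zero t
          _ ≤ max t 1 := le_max_right t 1
    have hnorm : ‖r * x ^ (r - 1) * t ^ (1 - r)‖ = r * x ^ (r - 1) * t ^ (1 - r) := by
      rw [Real.norm_eq_abs, abs_of_nonneg]
      exact mul_nonneg (mul_nonneg hr'.1.le (Real.rpow_nonneg hx0.le _))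
        (Real.rpow_nonneg ht.le _)
    rw [hnorm]
    calc r * x ^ (r - 1) * t ^ (1 - r) ≤ 1 * (s / 2) ^ (r - 1) * max t 1 := by
          apply mul_le_mul _ h2 (by positivity) (by positivity)
          exact mul_le_mul hr'.2 h1 (by positivity) (by norm_num)
      _ = (s / 2) ^ (r - 1) * max t 1 := by ring
  · exact ((continuous_rpow_comp (half_pos hs)
      (continuous_id.sub continuous_const)).mul continuous_const).intervalIntegrable _ _
  · apply Filter.Eventually.of_forall
    intro r hr x hx
    have hxlb : s / 2 < x := by
      have := abs_sub_lt_iff.mp (Metric.mem_ball.mp hx)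
      linarith [this.2]
    have hx0 : 0 < x := lt_trans (half_pos hs) hxlb
    have h := (Real.hasDerivAt_rpow_const (x := x) (p := r) (Or.inl hx0.ne')).mul_const
      (t ^ (1 - r))
    simpa [mul_assoc] using h

private lemma logMean0_comm (u v : ℝ) : logMean0 u v = logMean0 v u := by
  unfold logMean0
  rcases eq_or_ne u v with rfl | h
  · simp
  · by_cases hc : u ≤ 0 ∨ v ≤ 0
    · rw [if_pos hc, if_pos (Or.symm hc)]
    · rw [if_neg hc, if_neg (fun hh => hc (Or.symm hh)), if_neg h, if_neg (Ne.symm h)]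
      rw [← neg_sub v u, ← neg_sub (Real.log v), neg_div_neg_eq]

theorem logMean_supergradient (s t : ℝ) (hs : 0 < s) (ht : 0 < t) :
    (∀ u v : ℝ, 0 ≤ u → 0 ≤ v →
      logMean0 u v ≤ deriv (fun x => logMean0 x t) s * u
        + deriv (fun y => logMean0 s y) t * v) ∧
    deriv (fun x => logMean0 x t) s * s + deriv (fun y => logMean0 s y) t * t
      = logMean0 s t := by
  have hA := hasDerivAt_logMean_left hs ht
  have hB : HasDerivAt (fun y => logMean0 s y)
      (∫ r in (0:ℝ)..1, r * t ^ (r - 1) * s ^ (1 - r)) t := by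
    have h : (fun y => logMean0 s y) = fun y => logMean0 y s :=
      funext fun y => logMean0_comm s y
    rw [h]
    exact hasDerivAt_logMean_left ht hs
  rw [hA.deriv, hB.deriv]
  -- rewrite the second integral by the substitution r ↦ 1 - r
  have hBeq : (∫ r in (0:ℝ)..1, r * t ^ (r - 1) * s ^ (1 - r))
      = ∫ r in (0:ℝ)..1, (1 - r) * s ^ r * t ^ (-r) := by
    have h := intervalIntegral.integral_comp_sub_left
      (fun r => r * t ^ (r - 1) * s ^ (1 - r)) 1 (a := 0) (b := 1)
    norm_num at h
    rw [← h]
    apply intervalIntegral.integral_congr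
    intro r _
    simp only
    ring
  rw [hBeq]
  -- integrability facts
  have hiA : IntervalIntegrable (fun r => r * s ^ (r - 1) * t ^ (1 - r)) volume 0 1 :=
    ((continuous_id.mul (continuous_rpow_comp hs (continuous_id.sub continuous_const))).mul
      (continuous_rpow_comp ht (continuous_const.sub continuous_id))).intervalIntegrable _ _
  have hiB : IntervalIntegrable (fun r => (1 - r) * s ^ r * t ^ (-r)) volume 0 1 :=
    (((continuous_const.sub continuous_id).mul (continuous_rpow_comp hs continuous_id)).mul
      (continuous_rpow_comp ht continuous_neg)).intervalIntegrable _ _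
  have hA0 : 0 ≤ ∫ r in (0:ℝ)..1, r * s ^ (r - 1) * t ^ (1 - r) := by
    apply intervalIntegral.integral_nonneg zero_le_one
    intro r hr
    have : 0 ≤ r := hr.1
    positivity
  have hB0 : 0 ≤ ∫ r in (0:ℝ)..1, (1 - r) * s ^ r * t ^ (-r) := by
    apply intervalIntegral.integral_nonneg zero_le_one
    intro r hr
    have : 0 ≤ 1 - r := by linarith [hr.2]
    positivity
  constructor
  · intro u v hu hv
    rcases hu.eq_or_lt with h | hu'
    · have h0 : logMean0 u v = 0 := by
        rw [logMean0, if_pos (Or.inl (le_of_eq h.symm))]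
      rw [h0]
      exact add_nonneg (mul_nonneg hA0 hu) (mul_nonneg hB0 hv)
    rcases hv.eq_or_lt with h | hv'
    · have h0 : logMean0 u v = 0 := by
        rw [logMean0, if_pos (Or.inr (le_of_eq h.symm))]
      rw [h0]
      exact add_nonneg (mul_nonneg hA0 hu) (mul_nonneg hB0 hv)
    rw [logMean0_eq_integral hu' hv']
    have hmono : (∫ r in (0:ℝ)..1, u ^ r * v ^ (1 - r))
        ≤ ∫ r in (0:ℝ)..1,
            (r * s ^ (r - 1) * t ^ (1 - r)) * u + ((1 - r) * s ^ r * t ^ (-r)) * v := by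
      apply intervalIntegral.integral_mono_on zero_le_one
        (((continuous_rpow_comp hu' continuous_id).mul
          (continuous_rpow_comp hv' (continuous_const.sub continuous_id))).intervalIntegrable _ _)
        ((hiA.mul_const u).add (hiB.mul_const v))
      intro r hr
      obtain ⟨hr0, hr1⟩ := hr
      have hg := Real.geom_mean_le_arith_mean2_weighted hr0
        (by linarith : (0:ℝ) ≤ 1 - r) (div_nonneg hu'.le hs.le) (div_nonneg hv'.le ht.le)
        (by ring)
      have hst : (0:ℝ) < s ^ r * t ^ (1 - r) := by positivity
      have hmul := mul_le_mul_of_nonneg_left hg hst.le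
      have hLeq : s ^ r * t ^ (1 - r) * ((u / s) ^ r * (v / t) ^ (1 - r))
          = u ^ r * v ^ (1 - r) := by
        rw [Real.div_rpow hu'.le hs.le, Real.div_rpow hv'.le ht.le]
        have h1 : s ^ r ≠ 0 := by positivity
        have h2 : t ^ (1 - r) ≠ 0 := by positivity
        field_simp
      have hReq : s ^ r * t ^ (1 - r) * (r * (u / s) + (1 - r) * (v / t))
          = (r * s ^ (r - 1) * t ^ (1 - r)) * u + ((1 - r) * s ^ r * t ^ (-r)) * v := by
        rw [Real.rpow_sub_one hs.ne', show (-r : ℝ) = (1 - r) - 1 by ring,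
          Real.rpow_sub_one ht.ne']
        field_simp
      rw [hLeq, hReq] at hmul
      exact hmul
    calc (∫ r in (0:ℝ)..1, u ^ r * v ^ (1 - r))
        ≤ ∫ r in (0:ℝ)..1,
            (r * s ^ (r - 1) * t ^ (1 - r)) * u + ((1 - r) * s ^ r * t ^ (-r)) * v := hmono
      _ = (∫ r in (0:ℝ)..1, r * s ^ (r - 1) * t ^ (1 - r)) * u
            + (∫ r in (0:ℝ)..1, (1 - r) * s ^ r * t ^ (-r)) * v := by
          rw [intervalIntegral.integral_add (hiA.mul_const u) (hiB.mul_const v),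
            intervalIntegral.integral_mul_const, intervalIntegral.integral_mul_const]
  · rw [logMean0_eq_integral hs ht, ← intervalIntegral.integral_mul_const,
      ← intervalIntegral.integral_mul_const,
      ← intervalIntegral.integral_add (hiA.mul_const s) (hiB.mul_const t)]
    apply intervalIntegral.integral_congr
    intro r _
    simp only
    rw [Real.rpow_sub_one hs.ne', show (-r : ℝ) = (1 - r) - 1 by ring,
      Real.rpow_sub_one ht.ne']
    field_simp
    ring
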